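/- arXiv:2501.16285 — 5 statements merged into one kernel-verified Lean document; each statement's English description precedes it below -/
import Mathlib

section
/- (Eggleton's bound) For the Ulam sequence (a_n) with n ≥ 3, we have a_{n+1} ≤ a_n + a_{n-2}. -/
/-- `m` has exactly one representation as `a i + a j` with `1 ≤ i < j ≤ n`. -/
def UlamUniqueRep (a : ℕ → ℕ) (n m : ℕ) : Prop :=
  ∃! p : ℕ × ℕ, 1 ≤ p.1 ∧ p.1 < p.2 ∧ p.2 ≤ n ∧ a p.1 + a p.2 = m

/-- `a` (indexed from 1) is the Ulam sequence: `a 1 = 1`, `a 2 = 2`, and for `n ≥ 2`,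
`a (n+1)` is the least integer exceeding `a n` uniquely representable as the sum of
two distinct earlier terms. -/
def IsUlamSeq (a : ℕ → ℕ) : Prop :=
  a 1 = 1 ∧ a 2 = 2 ∧
    ∀ n, 2 ≤ n → IsLeast {m | a n < m ∧ UlamUniqueRep a n m} (a (n + 1))

/-- Eggleton's bound for the Ulam sequence. -/
theorem ulam_eggleton (a : ℕ → ℕ) (ha : IsUlamSeq a) (n : ℕ) (hn : 3 ≤ n) :
    a (n + 1) ≤ a n + a (n - 2) := by
  obtain ⟨h1, h2, h3⟩ := ha
  have step : ∀ m, 1 ≤ m → a m < a (m + 1) := by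
    intro m hm
    rcases Nat.lt_or_ge m 2 with h | h
    · have : m = 1 := by omega
      subst this
      show a 1 < a 2
      omega
    · exact (h3 m h).1.1
  have smono : ∀ i j, 1 ≤ i → i < j → a i < a j := by
    intro i j hi hij
    induction j with
    | zero => omega
    | succ k ih =>
      rcases Nat.lt_or_ge i k with h | h
      · exact lt_trans (ih h) (step k (by omega))
      · have : i = k := by omega
        subst this
        exact step i hi
  have hmem : a n < a n + a (n - 2) ∧ UlamUniqueRep a n (a n + a (n - 2)) := by
    constructor
    · have : 1 ≤ a (n - 2) := by
        rcases Nat.lt_or_ge (n - 2) 2 with h | h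
        · have h' : n - 2 = 1 := by omega
          rw [h']
          omega
        · have := smono 1 (n - 2) le_rfl (by omega)
          omega
      omega
    · refine ⟨(n - 2, n), ⟨by omega, by omega, le_rfl, by ring⟩, ?_⟩
      rintro ⟨i, j⟩ ⟨hi1, hij, hjn, hsum⟩
      simp only at hi1 hij hjn hsum ⊢
      have haj : a j ≤ a n := by
        rcases Nat.lt_or_ge j n with h | h
        · exact le_of_lt (smono j n (by omega) h)
        · have h' : j = n := by omega
          rw [h']
      have hin2 : n - 2 ≤ i := by
        by_contra h
        have : a i < a (n - 2) := smono i (n - 2) hi1 (by omega)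
        omega
      -- i ∈ {n-2, n-1}
      rcases Nat.lt_or_ge i (n - 1) with h | h
      · -- i = n - 2, then a j = a n, so j = n
        have hi : i = n - 2 := by omega
        subst hi
        have haje : a j = a n := by omega
        have hj : j = n := by
          by_contra h
          have : a j < a n := smono j n (by omega) (by omega)
          omega
        simp [hj]
      · -- i = n - 1: contradiction
        have hi : i = n - 1 := by omega
        subst hi
        have hjn' : j = n := by omega
        rw [hjn'] at hsum
        have h1 : a (n - 2) < a (n - 1) := smono (n - 2) (n - 1) (by omega) (by omega)
        omega
  exact (h3 n (by omega)).2 hmem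
end

section
/- For all sufficiently large n, the n-th Ulam number satisfies a_n ≤ 1.454^n. -/
lemma ulam_step (a : ℕ → ℕ) (ha : IsUlamSeq a) : ∀ n, 1 ≤ n → a n < a (n + 1) := by
  intro n hn
  rcases Nat.lt_or_ge n 2 with h | h
  · have hn1 : n = 1 := by omega
    subst hn1
    rw [ha.1, ha.2.1]
    norm_num
  · exact ((ha.2.2 n h).1).1

lemma ulam_lt (a : ℕ → ℕ) (ha : IsUlamSeq a) : ∀ i j, 1 ≤ i → i < j → a i < a j := by
  intro i j hi hij
  induction j with
  | zero => omega
  | succ k ihk =>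
      rcases Nat.lt_or_ge i k with h | h
      · exact lt_trans (ihk h) (ulam_step a ha k (by omega))
      · have : i = k := by omega
        subst this
        exact ulam_step a ha i hi

lemma ulam_le (a : ℕ → ℕ) (ha : IsUlamSeq a) : ∀ i j, 1 ≤ i → i ≤ j → a i ≤ a j := by
  intro i j hi hij
  rcases Nat.lt_or_ge i j with h | h
  · exact le_of_lt (ulam_lt a ha i j hi h)
  · have : i = j := by omega
    subst this; rfl

lemma ulam_pos (a : ℕ → ℕ) (ha : IsUlamSeq a) : ∀ i, 1 ≤ i → 1 ≤ a i := by
  intro i hi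
  have h := ulam_le a ha 1 i (by omega) hi
  rw [ha.1] at h
  exact h

lemma ulam_inj (a : ℕ → ℕ) (ha : IsUlamSeq a) :
    ∀ i j, 1 ≤ i → 1 ≤ j → a i = a j → i = j := by
  intro i j hi hj h
  rcases lt_trichotomy i j with hlt | heq | hgt
  · have := ulam_lt a ha i j hi hlt; omega
  · exact heq
  · have := ulam_lt a ha j i hj hgt; omega

/-- `a (m+1) + a (m+3)` is always uniquely representable at stage `m+3`,
hence bounds `a (m+4)`. -/
lemma ulam_factA (a : ℕ → ℕ) (ha : IsUlamSeq a) (m : ℕ) :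
    a (m + 4) ≤ a (m + 1) + a (m + 3) := by
  have hleast := ha.2.2 (m + 3) (by omega)
  apply hleast.2
  constructor
  · have := ulam_pos a ha (m + 1) (by omega)
    omega
  · refine ⟨(m + 1, m + 3), ⟨by simp, by simp, by simp, rfl⟩, ?_⟩
    rintro ⟨i, j⟩ ⟨hi1, hij, hjn, hsum⟩
    simp only at hi1 hij hjn hsum ⊢
    have hj3 : j = m + 3 ∨ j = m + 2 ∨ j ≤ m + 1 := by omega
    rcases hj3 with hj | hj | hj
    · subst hj
      have hai : a i = a (m + 1) := by omega
      have : i = m + 1 := ulam_inj a ha i (m + 1) hi1 (by omega) hai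
      subst this
      rfl
    · exfalso
      subst hj
      have h1 : a i ≤ a (m + 1) := ulam_le a ha i (m + 1) hi1 (by omega)
      have h2 : a (m + 2) < a (m + 3) := ulam_step a ha (m + 2) (by omega)
      omega
    · exfalso
      have h1 : a i < a (m + 1) := ulam_lt a ha i (m + 1) hi1 (by omega)
      have h2 : a j ≤ a (m + 1) := ulam_le a ha j (m + 1) (by omega) hj
      have h3 : a (m + 1) < a (m + 3) := ulam_lt a ha (m + 1) (m + 3) (by omega) (by omega)
      omega

/-- Either `a (m+3) + a (m+6)` is uniquely representable at stage `m+6`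
(and hence bounds `a (m+7)`), or the "pinned" equality holds. -/
lemma ulam_factB (a : ℕ → ℕ) (ha : IsUlamSeq a) (m : ℕ) :
    a (m + 7) ≤ a (m + 3) + a (m + 6) ∨
      a (m + 6) + a (m + 3) = a (m + 5) + a (m + 4) := by
  by_cases hpin : a (m + 6) + a (m + 3) = a (m + 5) + a (m + 4)
  · exact Or.inr hpin
  left
  have hleast := ha.2.2 (m + 6) (by omega)
  apply hleast.2
  constructor
  · have := ulam_pos a ha (m + 3) (by omega)
    omega
  · refine ⟨(m + 3, m + 6), ⟨by simp, by simp, by simp, rfl⟩, ?_⟩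
    rintro ⟨i, j⟩ ⟨hi1, hij, hjn, hsum⟩
    simp only at hi1 hij hjn hsum ⊢
    have hj3 : j = m + 6 ∨ j = m + 5 ∨ j = m + 4 ∨ j ≤ m + 3 := by omega
    rcases hj3 with hj | hj | hj | hj
    · subst hj
      have hai : a i = a (m + 3) := by omega
      have : i = m + 3 := ulam_inj a ha i (m + 3) hi1 (by omega) hai
      subst this
      rfl
    · exfalso
      subst hj
      -- a i + a (m+5) = a (m+3) + a (m+6), with a (m+5) < a (m+6) so a i > a (m+3)
      have h1 : a (m + 5) < a (m + 6) := ulam_step a ha (m + 5) (by omega)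
      have h2 : i = m + 4 := by
        by_contra hne
        have hi3 : i ≤ m + 3 := by omega
        have := ulam_le a ha i (m + 3) hi1 hi3
        omega
      subst h2
      omega
    · exfalso
      subst hj
      have h1 : a i ≤ a (m + 3) := ulam_le a ha i (m + 3) hi1 (by omega)
      have h2 : a (m + 4) < a (m + 6) := ulam_lt a ha (m + 4) (m + 6) (by omega) (by omega)
      omega
    · exfalso
      have h1 : a i < a (m + 3) := ulam_lt a ha i (m + 3) hi1 (by omega)
      have h2 : a j ≤ a (m + 3) := ulam_le a ha j (m + 3) (by omega) hj
      have h3 : a (m + 3) < a (m + 6) := ulam_lt a ha (m + 3) (m + 6) (by omega) (by omega)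
      omega

/-- Key dichotomy used for the growth bound. -/
lemma ulam_key (a : ℕ → ℕ) (ha : IsUlamSeq a) (m : ℕ) :
    a (m + 7) ≤ a (m + 6) + a (m + 3) ∨
      a (m + 7) ≤ a (m + 5) + a (m + 4) + a (m + 1) := by
  rcases ulam_factB a ha m with h | hpin
  · left; omega
  · right
    have h1 : a (m + 7) ≤ a (m + 4) + a (m + 6) := ulam_factA a ha (m + 3)
    have h2 : a (m + 4) ≤ a (m + 1) + a (m + 3) := ulam_factA a ha m
    omega

/-- Theorem 1: for all sufficiently large `n`, the `n`-th Ulam number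
satisfies `a n ≤ 1.454 ^ n`. -/
theorem ulam_growth_bound (a : ℕ → ℕ) (ha : IsUlamSeq a) :
    ∃ N : ℕ, ∀ n, N ≤ n → (a n : ℝ) ≤ 1.454 ^ n := by
  set C : ℝ := ((a 1 + a 2 + a 3 + a 4 + a 5 + a 6 : ℕ) : ℝ) with hCdef
  have hC0 : 0 ≤ C := Nat.cast_nonneg _
  have hbase : ∀ n, 1 ≤ n → n ≤ 6 → (a n : ℝ) ≤ C := by
    intro n h1 h6
    rw [hCdef]
    interval_cases n <;> exact Nat.cast_le.mpr (by omega)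
  have main : ∀ n, 1 ≤ n → (a n : ℝ) ≤ C * 1.45 ^ n := by
    intro n
    induction n using Nat.strong_induction_on with
    | _ n ih =>
      intro hn
      rcases Nat.lt_or_ge n 7 with h | h
      · calc (a n : ℝ) ≤ C := hbase n hn (by omega)
          _ ≤ C * 1.45 ^ n := le_mul_of_one_le_right hC0 (one_le_pow₀ (by norm_num))
      · obtain ⟨m, rfl⟩ : ∃ m, n = m + 7 := ⟨n - 7, by omega⟩
        have hp : (0 : ℝ) ≤ 1.45 ^ (m + 1) := by positivity
        rcases ulam_key a ha m with hk | hk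
        · have h6 := ih (m + 6) (by omega) (by omega)
          have h3 := ih (m + 3) (by omega) (by omega)
          have hcast : (a (m + 7) : ℝ) ≤ (a (m + 6) : ℝ) + (a (m + 3) : ℝ) := by
            exact_mod_cast hk
          have hnum : (1.45 : ℝ) ^ 5 + 1.45 ^ 2 ≤ 1.45 ^ 6 := by norm_num
          calc (a (m + 7) : ℝ) ≤ C * 1.45 ^ (m + 6) + C * 1.45 ^ (m + 3) :=
                hcast.trans (add_le_add h6 h3)
            _ = (C * 1.45 ^ (m + 1)) * ((1.45 : ℝ) ^ 5 + 1.45 ^ 2) := by ring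
            _ ≤ (C * 1.45 ^ (m + 1)) * (1.45 : ℝ) ^ 6 :=
                mul_le_mul_of_nonneg_left hnum (mul_nonneg hC0 hp)
            _ = C * 1.45 ^ (m + 7) := by ring
        · have h5 := ih (m + 5) (by omega) (by omega)
          have h4 := ih (m + 4) (by omega) (by omega)
          have h1 := ih (m + 1) (by omega) (by omega)
          have hcast : (a (m + 7) : ℝ) ≤
              (a (m + 5) : ℝ) + (a (m + 4) : ℝ) + (a (m + 1) : ℝ) := by
            exact_mod_cast hk
          have hnum : (1.45 : ℝ) ^ 4 + 1.45 ^ 3 + 1 ≤ 1.45 ^ 6 := by norm_num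
          calc (a (m + 7) : ℝ)
              ≤ C * 1.45 ^ (m + 5) + C * 1.45 ^ (m + 4) + C * 1.45 ^ (m + 1) :=
                hcast.trans (add_le_add (add_le_add h5 h4) h1)
            _ = (C * 1.45 ^ (m + 1)) * ((1.45 : ℝ) ^ 4 + 1.45 ^ 3 + 1) := by ring
            _ ≤ (C * 1.45 ^ (m + 1)) * (1.45 : ℝ) ^ 6 :=
                mul_le_mul_of_nonneg_left hnum (mul_nonneg hC0 hp)
            _ = C * 1.45 ^ (m + 7) := by ring
  have hq : (1 : ℝ) < 1.454 / 1.45 := by norm_num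
  have hev := (tendsto_pow_atTop_atTop_of_one_lt hq).eventually_ge_atTop C
  rw [Filter.eventually_atTop] at hev
  obtain ⟨N, hN⟩ := hev
  refine ⟨max N 1, fun n hn => ?_⟩
  have h1 : 1 ≤ n := le_trans (le_max_right N 1) hn
  have h2 : C ≤ (1.454 / 1.45) ^ n := hN n (le_trans (le_max_left _ _) hn)
  calc (a n : ℝ) ≤ C * 1.45 ^ n := main n h1
    _ ≤ (1.454 / 1.45) ^ n * 1.45 ^ n :=
        mul_le_mul_of_nonneg_right h2 (by positivity)
    _ = 1.454 ^ n := by rw [← mul_pow]; norm_num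
end

section
/- The spectral radius of the matrix product W = T_3 T_1^2 satisfies ρ(W)^{1/3} > 1.414, and in fact ρ(W)^{1/3} ≈ 1.4146 is the cube root of the largest real root of the characteristic polynomial of T_3 T_1^2. -/
open Matrix

/-- Type I matrix: `b_{n+1} = b_n + b_{n-3}` (complex entries, for the spectrum). -/
def T1 : Matrix (Fin 4) (Fin 4) ℂ := !![1,0,0,1; 1,0,0,0; 0,1,0,0; 0,0,1,0]

/-- Eggleton matrix: `b_{n+1} = b_n + b_{n-2}`. -/
def T3 : Matrix (Fin 4) (Fin 4) ℂ := !![1,0,1,0; 1,0,0,0; 0,1,0,0; 0,0,1,0]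

open Polynomial in
lemma det_fin_four' {R : Type*} [CommRing R] (A : Matrix (Fin 4) (Fin 4) R) :
    det A =
      A 0 0 * (A 1 1 * A 2 2 * A 3 3 - A 1 1 * A 2 3 * A 3 2 - A 1 2 * A 2 1 * A 3 3
        + A 1 2 * A 2 3 * A 3 1 + A 1 3 * A 2 1 * A 3 2 - A 1 3 * A 2 2 * A 3 1)
      - A 0 1 * (A 1 0 * A 2 2 * A 3 3 - A 1 0 * A 2 3 * A 3 2 - A 1 2 * A 2 0 * A 3 3
        + A 1 2 * A 2 3 * A 3 0 + A 1 3 * A 2 0 * A 3 2 - A 1 3 * A 2 2 * A 3 0)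
      + A 0 2 * (A 1 0 * A 2 1 * A 3 3 - A 1 0 * A 2 3 * A 3 1 - A 1 1 * A 2 0 * A 3 3
        + A 1 1 * A 2 3 * A 3 0 + A 1 3 * A 2 0 * A 3 1 - A 1 3 * A 2 1 * A 3 0)
      - A 0 3 * (A 1 0 * A 2 1 * A 3 2 - A 1 0 * A 2 2 * A 3 1 - A 1 1 * A 2 0 * A 3 2
        + A 1 1 * A 2 2 * A 3 0 + A 1 2 * A 2 0 * A 3 1 - A 1 2 * A 2 1 * A 3 0) := by
  rw [Matrix.det_succ_row_zero, Fin.sum_univ_four]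
  simp [Matrix.det_fin_three, Matrix.submatrix_apply, Fin.succAbove, Fin.lt_def,
    show (Fin.succ 2 : Fin 4) = 3 from rfl, show (Fin.castSucc 2 : Fin 4) = 2 from rfl,
    show ((3 : Fin 4) : ℕ) = 3 from rfl]
  ring

lemma W_eq : T3 * T1 ^ 2 = !![2,0,1,1; 1,0,1,1; 1,0,0,1; 1,0,0,0] := by
  rw [sq]
  ext i j
  fin_cases i <;> fin_cases j <;>
    norm_num [T1, T3, Matrix.mul_apply, Fin.sum_univ_four, Matrix.vecHead, Matrix.vecTail, Matrix.cons_val_two, Matrix.cons_val_three]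

open Polynomial in
lemma charpoly_W : Matrix.charpoly (T3 * T1 ^ 2) = X^4 - 2*X^3 - 2*X^2 - X := by
  rw [W_eq, Matrix.charpoly, det_fin_four']
  simp [Matrix.charmatrix_apply, Matrix.diagonal_apply, Matrix.vecHead, Matrix.vecTail,
    map_ofNat]
  ring

open Polynomial in
lemma spec_iff (M : Matrix (Fin 4) (Fin 4) ℂ) (μ : ℂ) :
    μ ∈ spectrum ℂ M ↔ (Matrix.charpoly M).IsRoot μ := by
  have key : M.charmatrix.map (evalRingHom μ) = algebraMap ℂ (Matrix (Fin 4) (Fin 4) ℂ) μ - M := by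
    ext i j
    by_cases h : i = j
    · subst h; simp [Matrix.charmatrix_apply_eq, Matrix.algebraMap_matrix_apply]
    · simp [Matrix.charmatrix_apply_ne _ _ _ h, Matrix.algebraMap_matrix_apply, h]
  rw [spectrum.mem_iff, Matrix.isUnit_iff_isUnit_det, isUnit_iff_ne_zero, not_ne_iff,
    Polynomial.IsRoot, Matrix.charpoly, ← Polynomial.coe_evalRingHom, RingHom.map_det,
    RingHom.mapMatrix_apply, key]

open Polynomial in
lemma isRoot_W_iff (μ : ℂ) :
    (Matrix.charpoly (T3 * T1 ^ 2)).IsRoot μ ↔ μ^4 = 2*μ^3 + 2*μ^2 + μ := by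
  rw [charpoly_W, Polynomial.IsRoot]
  simp only [eval_sub, eval_pow, eval_mul, eval_ofNat, eval_X]
  constructor <;> intro h <;> linear_combination h

/-- The spectral radius of `W = T3 * T1 ^ 2` satisfies `ρ(W)^{1/3} > 1.414`,
i.e. `ρ(W) > 1.414 ^ 3`, and `ρ(W)` is the largest real root of the
characteristic polynomial of `W`. -/
theorem spectral_radius_T3T1sq :
    ENNReal.ofReal (1.414 ^ 3) < spectralRadius ℂ (T3 * T1 ^ 2) ∧
      ∃ ρ : ℝ, spectralRadius ℂ (T3 * T1 ^ 2) = ENNReal.ofReal ρ ∧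
        (Matrix.charpoly (T3 * T1 ^ 2)).IsRoot (ρ : ℂ) ∧
        ∀ x : ℝ, (Matrix.charpoly (T3 * T1 ^ 2)).IsRoot (x : ℂ) → x ≤ ρ := by
  -- get the Perron root by IVT
  have hcont : ContinuousOn (fun t : ℝ => t^3 - (2*t^2 + (2*t + 1))) (Set.Icc 2.83 2.84) :=
    (continuous_id.pow 3 |>.sub ((continuous_const.mul (continuous_id.pow 2)).add
        ((continuous_const.mul continuous_id).add continuous_const))).continuousOn
  have h0mem : (0:ℝ) ∈ Set.Icc ((fun t : ℝ => t^3 - (2*t^2 + (2*t + 1))) 2.83)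
      ((fun t : ℝ => t^3 - (2*t^2 + (2*t + 1))) 2.84) := by
    constructor <;> norm_num
  obtain ⟨ρ, hmem, hρ0⟩ :=
    intermediate_value_Icc (by norm_num : (2.83:ℝ) ≤ 2.84) hcont h0mem
  have hρ3 : ρ^3 = 2*ρ^2 + 2*ρ + 1 := by
    simp only at hρ0; linarith [hρ0]
  have hρlb : (2.83:ℝ) ≤ ρ := hmem.1
  have hρub : ρ ≤ 2.84 := hmem.2
  -- ρ is a root of the charpoly
  have hroot : (Matrix.charpoly (T3 * T1 ^ 2)).IsRoot (ρ : ℂ) := by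
    rw [isRoot_W_iff]
    have : (ρ:ℂ)^3 = 2*(ρ:ℂ)^2 + 2*(ρ:ℂ) + 1 := by exact_mod_cast hρ3
    linear_combination (ρ : ℂ) * this
  -- every root has norm at most ρ
  have hbound : ∀ μ : ℂ, (Matrix.charpoly (T3 * T1 ^ 2)).IsRoot μ → ‖μ‖ ≤ ρ := by
    intro μ hμ
    rw [isRoot_W_iff] at hμ
    set t := ‖μ‖ with ht
    have ht0 : 0 ≤ t := norm_nonneg _
    have h4 : t^4 ≤ 2*t^3 + 2*t^2 + t := by
      calc t^4 = ‖μ^4‖ := by rw [norm_pow]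
        _ = ‖2*μ^3 + 2*μ^2 + μ‖ := by rw [hμ]
        _ ≤ ‖2*μ^3 + 2*μ^2‖ + ‖μ‖ := norm_add_le _ _
        _ ≤ ‖2*μ^3‖ + ‖2*μ^2‖ + ‖μ‖ := by linarith [norm_add_le (2*μ^3) (2*μ^2)]
        _ = 2*t^3 + 2*t^2 + t := by
            simp [norm_mul, norm_pow, ht]
    by_contra h
    push_neg at h
    nlinarith [mul_pos (by linarith : (0:ℝ) < t) (by linarith : (0:ℝ) < t - ρ),
      sq_nonneg (t - ρ), sq_nonneg (t + ρ), mul_pos (by linarith : (0:ℝ) < t)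
        (mul_pos (by linarith : (0:ℝ) < t - ρ) (by nlinarith : (0:ℝ) < t^2 + t*ρ + ρ^2 - 2*t - 2*ρ - 2))]
  have hρspec : (ρ : ℂ) ∈ spectrum ℂ (T3 * T1 ^ 2) := (spec_iff _ _).mpr hroot
  have hρnorm : ENNReal.ofReal ρ = (‖(ρ:ℂ)‖₊ : ENNReal) := by
    rw [← enorm_eq_nnnorm, ← ofReal_norm, Complex.norm_real, Real.norm_eq_abs,
      abs_of_nonneg (by linarith)]
  have hsr : spectralRadius ℂ (T3 * T1 ^ 2) = ENNReal.ofReal ρ := by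
    apply le_antisymm
    · rw [spectralRadius]
      refine iSup₂_le fun k hk => ?_
      rw [← enorm_eq_nnnorm, ← ofReal_norm]
      exact ENNReal.ofReal_le_ofReal (hbound k ((spec_iff _ _).mp hk))
    · rw [hρnorm, spectralRadius]
      exact le_iSup₂ (f := fun (k : ℂ) (_ : k ∈ spectrum ℂ (T3 * T1 ^ 2)) => (‖k‖₊ : ENNReal))
        (ρ : ℂ) hρspec
  refine ⟨?_, ρ, hsr, hroot, ?_⟩
  · rw [hsr]
    rw [ENNReal.ofReal_lt_ofReal_iff (by linarith)]
    norm_num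
    linarith
  · intro x hx
    calc x ≤ |x| := le_abs_self x
      _ = ‖(x:ℂ)‖ := by rw [Complex.norm_real, Real.norm_eq_abs]
      _ ≤ ρ := hbound _ hx
end

section
/- (Small gaps in the Ulam sequence) There exists a constant c > 0 such that for all integers n ≥ 2, min over 1 ≤ k ≤ n of a_{k+1}/a_k ≤ 1 + c · (log n)/n, where (a_k) is the Ulam sequence. -/
lemma exp_half_le {δ : ℝ} (h0 : 0 ≤ δ) (h1 : δ ≤ 1) : Real.exp (δ/2) ≤ 1 + δ := by
  have a1 : 1 - δ/2 ≤ Real.exp (-(δ/2)) := by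
    have := Real.add_one_le_exp (-(δ/2)); linarith
  have a2 : (0:ℝ) < 1 - δ/2 := by linarith
  have a3 : Real.exp (δ/2) ≤ (1 - δ/2)⁻¹ := by
    have he : Real.exp (δ/2) = (Real.exp (-(δ/2)))⁻¹ := by
      rw [Real.exp_neg, inv_inv]
    rw [he]
    exact inv_anti₀ a2 a1
  have a4 : (1 - δ/2)⁻¹ ≤ 1 + δ := by
    rw [← one_div, div_le_iff₀ a2]
    nlinarith
  linarith

set_option maxHeartbeats 1000000 in
lemma ulam_no_big_gaps (a : ℕ → ℕ) (n : ℕ) (δ : ℝ)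
    (ha1 : a 1 = 1)
    (hleast : ∀ l, 2 ≤ l → IsLeast {m | a l < m ∧ UlamUniqueRep a l m} (a (l+1)))
    (hn : 40000 ≤ n) (hδpos : 0 < δ) (hδ1 : δ ≤ 1)
    (hD2 : 2/δ ≤ (1+δ)^(n/16))
    (hstep : ∀ k, 1 ≤ k → k ≤ n → (1+δ) * (a k : ℝ) < a (k+1)) : False := by
  classical
  set h := 3*n/4 with hh
  set D := n/16 with hD
  have d1 := Nat.div_add_mod (3*n) 4
  have d2 : (3*n)%4 < 4 := Nat.mod_lt _ (by norm_num)
  have d3 := Nat.div_add_mod n 16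
  have d4 : n % 16 < 16 := Nat.mod_lt _ (by omega)
  have hb1 : 4*h ≤ 3*n := by omega
  have hb2 : 3*n < 4*h+4 := by omega
  have hb3 : 16*D ≤ n := by omega
  have hb4 : n < 16*D+16 := by omega
  have hhn : h + D + 1 ≤ n := by omega
  have hh2 : 2 ≤ h := by omega
  -- positivity of terms
  have hpos : ∀ k, 1 ≤ k → k ≤ n+1 → 1 ≤ a k := by
    intro k
    induction k with
    | zero => intro h0 _; exact absurd h0 (by omega)
    | succ m IH =>
      intro _ hm
      by_cases hm0 : m = 0
      · subst hm0; simpa using ha1.ge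
      · have h1m : 1 ≤ m := by omega
        have hIH : 1 ≤ a m := IH h1m (by omega)
        have hs := hstep m h1m (by omega)
        have hc : (1:ℝ) ≤ (a m : ℝ) := by exact_mod_cast hIH
        have hlt : (1:ℝ) < a (m+1) := by nlinarith
        exact_mod_cast hlt.le
  -- geometric growth
  have hgrow : ∀ i t, 1 ≤ i → i + t ≤ n+1 → (1+δ)^t * (a i:ℝ) ≤ a (i+t) := by
    intro i t hi
    induction t with
    | zero => intro _; simp
    | succ t IH =>
      intro hit
      have hIH := IH (by omega)
      have hs := hstep (i+t) (by omega) (by omega)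
      calc (1+δ)^(t+1) * (a i:ℝ) = (1+δ)*((1+δ)^t * a i) := by ring
        _ ≤ (1+δ) * a (i+t) := by
            apply mul_le_mul_of_nonneg_left hIH (by linarith)
        _ ≤ a (i+t+1) := hs.le
  have hmonoR : ∀ i j, 1 ≤ i → i ≤ j → j ≤ n+1 → (a i:ℝ) ≤ a j := by
    intro i j hi hij hj
    obtain ⟨t, rfl⟩ : ∃ t, j = i + t := ⟨j - i, by omega⟩
    have hg := hgrow i t hi (by omega)
    have h1 : (1:ℝ)^t ≤ (1+δ)^t := pow_le_pow_left₀ (by norm_num) (by linarith) t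
    simp only [one_pow] at h1
    nlinarith [show (0:ℝ) ≤ (a i:ℝ) from Nat.cast_nonneg _]
  have hstrictN : ∀ i j, 1 ≤ i → i < j → j ≤ n+1 → a i < a j := by
    intro i j hi hij hj
    have hs := hstep i hi (by omega)
    have hc : (1:ℝ) ≤ (a i : ℝ) := by exact_mod_cast hpos i hi (by omega)
    have h1 : (a i:ℝ) < a (i+1) := by nlinarith
    have h2 : (a (i+1):ℝ) ≤ a j := hmonoR (i+1) j (by omega) (by omega) hj
    have : (a i:ℝ) < a j := lt_of_lt_of_le h1 h2
    exact_mod_cast this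
  have hkey : ∀ j, h + D ≤ j → j ≤ n → 2/δ * (a h:ℝ) ≤ a j := by
    intro j hj1 hj2
    obtain ⟨t, rfl⟩ : ∃ t, j = h + t := ⟨j - h, by omega⟩
    have hg := hgrow h t (by omega) (by omega)
    have h1 : ((1+δ):ℝ)^D ≤ (1+δ)^t := pow_le_pow_right₀ (by linarith) (by omega)
    have h2 : (0:ℝ) ≤ a h := Nat.cast_nonneg _
    calc 2/δ * (a h:ℝ) ≤ (1+δ)^D * a h := mul_le_mul_of_nonneg_right hD2 h2
      _ ≤ (1+δ)^t * a h := mul_le_mul_of_nonneg_right h1 h2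
      _ ≤ a (h+t) := hg
  have hah1 : (1:ℝ) ≤ a h := by exact_mod_cast hpos h (by omega) (by omega)
  have hgap : ∀ j, 1 ≤ j → j ≤ n → (a j:ℝ) + δ * a j < a (j+1) := by
    intro j h1 h2
    have := hstep j h1 h2
    nlinarith
  -- core distinctness argument
  have core : ∀ i j i' j', 1 ≤ i' → i' ≤ h → i ≤ h → h+D+1 ≤ j → j ≤ n → 1 ≤ j' → j' < j →
      a i + a j = a i' + a j' → False := by
    intro i j i' j' hi'1 hi'h hih hjl hjn hj'1 hj'j hsum
    obtain ⟨j₁, rfl⟩ : ∃ j₁, j = j₁ + 1 := ⟨j - 1, by omega⟩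
    have h1 : (a j':ℝ) ≤ a j₁ := hmonoR j' j₁ hj'1 (by omega) (by omega)
    have h2 : (a i':ℝ) ≤ a h := hmonoR i' h hi'1 hi'h (by omega)
    have h3 := hgap j₁ (by omega) (by omega)
    have h4 := hkey j₁ (by omega) (by omega)
    have h5 : 2 * (a h:ℝ) ≤ δ * a j₁ := by
      have hm := mul_le_mul_of_nonneg_left h4 hδpos.le
      calc 2*(a h:ℝ) = δ * (2/δ * a h) := by field_simp
        _ ≤ δ * a j₁ := hm
    have hsumR : (a i:ℝ) + a (j₁+1) = a i' + a j' := by exact_mod_cast hsum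
    have h6 : (0:ℝ) ≤ a i := Nat.cast_nonneg _
    linarith
  set K : Finset ℕ := (Finset.Icc 1 (n+1)).image a with hK
  -- all relevant sums are below a (n+1)
  have hmlt : ∀ i j, 1 ≤ i → i ≤ h → 1 ≤ j → j ≤ n → a i + a j < a (n+1) := by
    intro i j hi1 hih hj1 hjn
    have h1 : (a i:ℝ) ≤ a h := hmonoR i h hi1 hih (by omega)
    have h2 : (a j:ℝ) ≤ a n := hmonoR j n hj1 hjn (by omega)
    have h3 := hkey n (by omega) le_rfl
    have h4 := hstep n (by omega) le_rfl
    have h5 : (a h:ℝ) ≤ δ/2 * a n := by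
      have hm := mul_le_mul_of_nonneg_left h3 (by positivity : (0:ℝ) ≤ δ/2)
      calc (a h:ℝ) = δ/2 * (2/δ * a h) := by field_simp
        _ ≤ δ/2 * a n := hm
    have h6 : (1:ℝ) ≤ a n := by exact_mod_cast hpos n (by omega) (by omega)
    have hfin : ((a i + a j : ℕ):ℝ) < a (n+1) := by push_cast; nlinarith
    exact_mod_cast hfin
  -- locating a non-Ulam value strictly between consecutive terms
  have hfind : ∀ i j, 1 ≤ i → i ≤ h → h+D+1 ≤ j → j ≤ n → a i + a j ∉ K →
      ∃ l, j ≤ l ∧ l ≤ n ∧ a l < a i + a j ∧ a i + a j < a (l+1) := by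
    intro i j hi1 hih hj1 hjn hKm
    have hmn : a i + a j < a (n+1) := hmlt i j hi1 hih (by omega) hjn
    have haj : a j < a i + a j := by have := hpos i hi1 (by omega); omega
    have haux : ∀ t l, j ≤ l → l ≤ n → a l < a i + a j → n - l ≤ t →
        ∃ l', j ≤ l' ∧ l' ≤ n ∧ a l' < a i + a j ∧ a i + a j < a (l'+1) := by
      intro t
      induction t with
      | zero =>
        intro l hl1 hl2 hl3 hl4
        have hln : l = n := by omega
        exact ⟨l, hl1, hl2, hl3, by rw [hln]; exact hmn⟩
      | succ t IH =>
        intro l hl1 hl2 hl3 hl4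
        by_cases hc : a i + a j < a (l+1)
        · exact ⟨l, hl1, hl2, hl3, hc⟩
        · have hne : a (l+1) ≠ a i + a j := by
            intro he
            exact hKm (Finset.mem_image.2 ⟨l+1, Finset.mem_Icc.2 ⟨by omega, by omega⟩, he⟩)
          have hlt : a (l+1) < a i + a j := by omega
          have hln : l < n := by
            by_contra hc2
            have : l = n := by omega
            subst this; omega
          exact IH (l+1) (by omega) (by omega) hlt (by omega)
    exact haux (n - j) j le_rfl hjn haj (by omega)
  -- every non-Ulam sum has a second representation high up
  have hsecond : ∀ i j, 1 ≤ i → i ≤ h → h+D+1 ≤ j → j ≤ n → a i + a j ∉ K →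
      ∃ q : ℕ × ℕ, h+1 ≤ q.1 ∧ q.1 < q.2 ∧ q.2 ≤ n ∧ a q.1 + a q.2 = a i + a j := by
    intro i j hi1 hih hj1 hjn hKm
    obtain ⟨l, hjl, hln, hal, hal2⟩ := hfind i j hi1 hih hj1 hjn hKm
    have hl2 : 2 ≤ l := by omega
    have hnu : ¬ UlamUniqueRep a l (a i + a j) := by
      intro hu
      have := (hleast l hl2).2 ⟨hal, hu⟩
      omega
    have hp0 : 1 ≤ (i, j).1 ∧ (i, j).1 < (i, j).2 ∧ (i, j).2 ≤ l ∧
        a (i, j).1 + a (i, j).2 = a i + a j := ⟨hi1, by omega, hjl, rfl⟩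
    obtain ⟨q, hq, hqne⟩ :
        ∃ q : ℕ × ℕ, (1 ≤ q.1 ∧ q.1 < q.2 ∧ q.2 ≤ l ∧ a q.1 + a q.2 = a i + a j) ∧ q ≠ (i, j) := by
      by_contra hc
      push_neg at hc
      exact hnu ⟨(i,j), hp0, fun y hy => hc y hy⟩
    obtain ⟨hq1, hq2, hq3, hq4⟩ := hq
    rcases lt_trichotomy q.2 j with hlt | heq | hgt
    · have hq1h : h + 1 ≤ q.1 := by
        by_contra hc
        exact core i j q.1 q.2 hq1 (by omega) hih hj1 hjn (by omega) hlt hq4.symm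
      exact ⟨q, hq1h, hq2, by omega, hq4⟩
    · exfalso
      have haq2 : a q.2 = a j := by rw [heq]
      have haq : a q.1 = a i := by omega
      have hq1i : q.1 = i := by
        rcases lt_trichotomy q.1 i with hx | hx | hx
        · have := hstrictN q.1 i hq1 hx (by omega); omega
        · exact hx
        · have := hstrictN i q.1 hi1 hx (by omega); omega
      exact hqne (Prod.ext hq1i heq)
    · exfalso
      have h7 : (a (j+1):ℝ) ≤ a q.2 := hmonoR (j+1) q.2 (by omega) (by omega) (by omega)
      have h6 := hgap j (by omega) hjn
      have h5 : 2*(a h:ℝ) ≤ δ * a j := by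
        have h4 := hkey j (by omega) hjn
        have hm := mul_le_mul_of_nonneg_left h4 hδpos.le
        calc 2*(a h:ℝ) = δ * (2/δ * a h) := by field_simp
          _ ≤ δ * a j := hm
      have h8 : (a i:ℝ) ≤ a h := hmonoR i h hi1 hih (by omega)
      have h10 : (a q.1:ℝ) + a q.2 = a i + a j := by exact_mod_cast hq4
      have h11 : (1:ℝ) ≤ a q.1 := by exact_mod_cast hpos q.1 hq1 (by omega)
      linarith
  -- counting
  set f : ℕ × ℕ → ℕ := fun p => a p.1 + a p.2 with hf
  set P : Finset (ℕ × ℕ) := (Finset.Icc 1 h) ×ˢ (Finset.Icc (h+D+1) n) with hP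
  have hmemP : ∀ p : ℕ × ℕ, p ∈ P ↔ (1 ≤ p.1 ∧ p.1 ≤ h) ∧ (h+D+1 ≤ p.2 ∧ p.2 ≤ n) := by
    intro p
    rw [hP, Finset.mem_product, Finset.mem_Icc, Finset.mem_Icc]
  have hinj : Set.InjOn f P := by
    intro p hp q hq hfe
    rw [Finset.mem_coe, hmemP] at hp hq
    simp only [hf] at hfe
    rcases lt_trichotomy p.2 q.2 with hlt | heq | hgt
    · exact absurd (core q.1 q.2 p.1 p.2 hp.1.1 hp.1.2 hq.1.2 hq.2.1 hq.2.2 (by omega) hlt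
        hfe.symm) not_false
    · have hap : a p.2 = a q.2 := by rw [heq]
      have ha1' : a p.1 = a q.1 := by omega
      have : p.1 = q.1 := by
        rcases lt_trichotomy p.1 q.1 with hx | hx | hx
        · have := hstrictN p.1 q.1 hp.1.1 hx (by omega); omega
        · exact hx
        · have := hstrictN q.1 p.1 hq.1.1 hx (by omega); omega
      exact Prod.ext this heq
    · exact absurd (core p.1 p.2 q.1 q.2 hq.1.1 hq.1.2 hp.1.2 hp.2.1 hp.2.2 (by omega) hgt
        hfe) not_false
  have hcard1 : (P.image f).card = P.card := Finset.card_image_of_injOn hinj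
  have hsplit := Finset.card_filter_add_card_filter_not
    (s := P.image f) (p := fun m => m ∈ K)
  have hV1 : ((P.image f).filter (fun m => m ∈ K)).card ≤ n + 1 := by
    have hsub : (P.image f).filter (fun m => m ∈ K) ⊆ K := by
      intro x hx; exact (Finset.mem_filter.1 hx).2
    calc ((P.image f).filter (fun m => m ∈ K)).card ≤ K.card := Finset.card_le_card hsub
      _ ≤ (Finset.Icc 1 (n+1)).card := Finset.card_image_le
      _ = n + 1 := by rw [Nat.card_Icc]; omega
  set Q : Finset (ℕ × ℕ) := (Finset.Icc (h+1) n) ×ˢ (Finset.Icc (h+1) n) with hQ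
  have hV2 : ((P.image f).filter (fun m => m ∉ K)).card ≤ Q.card := by
    have hex : ∀ m ∈ (P.image f).filter (fun m => m ∉ K),
        ∃ q : ℕ × ℕ, h+1 ≤ q.1 ∧ q.1 < q.2 ∧ q.2 ≤ n ∧ a q.1 + a q.2 = m := by
      intro m hm
      rw [Finset.mem_filter] at hm
      obtain ⟨p, hp, rfl⟩ := Finset.mem_image.1 hm.1
      rw [hmemP] at hp
      exact hsecond p.1 p.2 hp.1.1 hp.1.2 hp.2.1 hp.2.2 hm.2
    apply Finset.card_le_card_of_injOn
      (fun m => if hm : ∃ q : ℕ × ℕ, h+1 ≤ q.1 ∧ q.1 < q.2 ∧ q.2 ≤ n ∧ a q.1 + a q.2 = m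
        then hm.choose else (0,0))
    · intro m hm
      have hmex := hex m hm
      simp only [Finset.mem_coe]
      rw [dif_pos hmex]
      obtain ⟨s1, s2, s3, s4⟩ := hmex.choose_spec
      rw [hQ, Finset.mem_product, Finset.mem_Icc, Finset.mem_Icc]
      omega
    · intro m1 hm1 m2 hm2 he
      have h1 := hex m1 hm1
      have h2 := hex m2 hm2
      simp only [dif_pos h1, dif_pos h2] at he
      have s1 := h1.choose_spec
      have s2 := h2.choose_spec
      rw [← s1.2.2.2, ← s2.2.2.2, he]
  have hQcard : Q.card = (n - h) * (n - h) := by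
    rw [hQ, Finset.card_product, Nat.card_Icc]
    congr 1 <;> omega
  have hPcard : P.card = h * (n - h - D) := by
    rw [hP, Finset.card_product, Nat.card_Icc, Nat.card_Icc]
    congr 1 <;> omega
  have hmain : h * (n - h - D) ≤ (n+1) + (n-h)*(n-h) := by
    calc h * (n - h - D) = P.card := hPcard.symm
      _ = (P.image f).card := hcard1.symm
      _ = ((P.image f).filter (fun m => m ∈ K)).card
          + ((P.image f).filter (fun m => m ∉ K)).card := hsplit.symm
      _ ≤ (n+1) + Q.card := add_le_add hV1 hV2
      _ = (n+1) + (n-h)*(n-h) := by rw [hQcard]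
  -- final arithmetic contradiction
  obtain ⟨u, hu⟩ : ∃ u, n = h + D + u := ⟨n - h - D, by omega⟩
  have huu : n - h - D = u := by omega
  have hvv : n - h = D + u := by omega
  rw [huu, hvv] at hmain
  have f1 : 3*n ≤ 16*u := by omega
  have f2 : 4*(D+u) ≤ n+3 := by omega
  have f3 : 3*n ≤ 4*h+3 := by omega
  have A1 : (3*n)*(3*n) ≤ (4*h+3)*(16*u) := Nat.mul_le_mul f3 f1
  have A4 : (4*(D+u))*(4*(D+u)) ≤ (n+3)*(n+3) := Nat.mul_le_mul f2 f2
  have A6 : 40000*n ≤ n*n := Nat.mul_le_mul_right n hn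
  have B1 : 9*(n*n) ≤ 64*(h*u)+48*u := by
    calc 9*(n*n) = (3*n)*(3*n) := by ring
      _ ≤ (4*h+3)*(16*u) := A1
      _ = 64*(h*u)+48*u := by ring
  have B2 : 16*((D+u)*(D+u)) ≤ n*n+6*n+9 := by
    calc 16*((D+u)*(D+u)) = (4*(D+u))*(4*(D+u)) := by ring
      _ ≤ (n+3)*(n+3) := A4
      _ = n*n+6*n+9 := by ring
  have B5 : u ≤ n := by omega
  have B3 : h*u ≤ (n+1) + (D+u)*(D+u) := hmain
  generalize hM : n*n = M at B1 B2 A6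
  generalize hY : (D+u)*(D+u) = Y at B2 B3
  generalize hX : h*u = X at B1 B3
  omega

/-- Theorem 2: small gaps in the Ulam sequence. There exists `c > 0` such that for
every `n ≥ 2` some consecutive ratio `a (k+1) / a k` with `1 ≤ k ≤ n` is at most
`1 + c * log n / n`. -/
theorem ulam_small_gaps (a : ℕ → ℕ) (ha : IsUlamSeq a) :
    ∃ c : ℝ, 0 < c ∧ ∀ n : ℕ, 2 ≤ n →
      ∃ k, 1 ≤ k ∧ k ≤ n ∧
        (a (k + 1) : ℝ) / (a k : ℝ) ≤ 1 + c * Real.log n / n := by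
  obtain ⟨ha1, ha2, hleast⟩ := ha
  refine ⟨60000, by norm_num, ?_⟩
  intro n hn
  have hn2 : (2:ℝ) ≤ n := by exact_mod_cast hn
  have hn0 : (0:ℝ) < n := by linarith
  have hlog2 : Real.log 2 ≤ Real.log n := Real.log_le_log (by norm_num) hn2
  have hlogpos : 0 < Real.log n := lt_of_lt_of_le (Real.log_pos (by norm_num)) hlog2
  rcases lt_or_ge n 40000 with hsmall | hbig
  · refine ⟨1, le_rfl, by omega, ?_⟩
    have e12 : (1:ℕ) + 1 = 2 := rfl
    rw [e12, ha2, ha1]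
    have h1 : (1:ℝ) ≤ 60000 * Real.log n / n := by
      rw [le_div_iff₀ hn0]
      have hl2 : (0.6931471803:ℝ) < Real.log 2 := Real.log_two_gt_d9
      have hnn : (n:ℝ) ≤ 40000 := by exact_mod_cast hsmall.le
      nlinarith
    push_cast
    linarith
  · by_contra hcon
    push_neg at hcon
    set δ : ℝ := 100 * Real.log n / n with hδ
    have hδpos : 0 < δ := by
      rw [hδ]; positivity
    have hsq : (200:ℝ) ≤ Real.sqrt n := by
      rw [show (200:ℝ) = Real.sqrt (200^2) from (Real.sqrt_sq (by norm_num)).symm]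
      apply Real.sqrt_le_sqrt
      norm_num
      exact_mod_cast hbig
    have hsafe : Real.sqrt n * Real.sqrt n = n := Real.mul_self_sqrt hn0.le
    have hδ1 : δ ≤ 1 := by
      rw [hδ, div_le_one hn0]
      have hlogsqrt : Real.log n = 2 * Real.log (Real.sqrt n) := by
        rw [Real.log_sqrt hn0.le]; ring
      have h2 : Real.log (Real.sqrt n) ≤ Real.sqrt n - 1 :=
        Real.log_le_sub_one_of_pos (by nlinarith)
      nlinarith [mul_le_mul_of_nonneg_right hsq (Real.sqrt_nonneg (n:ℝ))]
    have hL1 : 1 ≤ Real.log n := by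
      rw [Real.le_log_iff_exp_le hn0]
      have h1 := Real.exp_one_lt_d9
      have h2 : (40000:ℝ) ≤ n := by exact_mod_cast hbig
      linarith
    have hD2 : 2/δ ≤ (1+δ)^(n/16) := by
      have hstep1 : 2/δ ≤ (n:ℝ) := by
        rw [div_le_iff₀ hδpos]
        have he : (n:ℝ) * δ = 100 * Real.log n := by
          rw [hδ]; field_simp
        rw [he]; linarith
      have hdivN : n ≤ 50 * (n/16) := by
        have := Nat.div_add_mod n 16
        have := Nat.mod_lt n (show 0 < 16 by omega)
        omega
      have hdiv : (n:ℝ) ≤ 50 * ((n/16 : ℕ):ℝ) := by exact_mod_cast hdivN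
      have hexp : Real.exp (δ/2) ≤ 1 + δ := exp_half_le hδpos.le hδ1
      have hlogle : Real.log n ≤ ((n/16 : ℕ):ℝ) * (δ/2) := by
        rw [hδ]
        rw [show ((n/16:ℕ):ℝ) * (100 * Real.log n / n / 2)
            = (50 * ((n/16:ℕ):ℝ)) * Real.log n / n from by ring]
        rw [le_div_iff₀ hn0]
        nlinarith
      calc 2/δ ≤ (n:ℝ) := hstep1
        _ = Real.exp (Real.log n) := (Real.exp_log hn0).symm
        _ ≤ Real.exp (((n/16:ℕ):ℝ) * (δ/2)) := Real.exp_le_exp.2 hlogle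
        _ = Real.exp (δ/2) ^ (n/16 : ℕ) := by rw [← Real.exp_nat_mul]
        _ ≤ (1+δ)^(n/16 : ℕ) := pow_le_pow_left₀ (Real.exp_nonneg _) hexp _
    have hstep : ∀ k, 1 ≤ k → k ≤ n → (1+δ) * (a k:ℝ) < a (k+1) := by
      intro k hk1 hkn
      have hc := hcon k hk1 hkn
      have hak : (0:ℝ) < a k := by
        by_contra hz
        push_neg at hz
        have hz0 : (a k : ℝ) = 0 := le_antisymm hz (Nat.cast_nonneg _)
        rw [hz0, div_zero] at hc
        have : (0:ℝ) < 60000 * Real.log n / n := by positivity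
        linarith
      rw [lt_div_iff₀ hak] at hc
      have hδle : δ * (a k:ℝ) ≤ 60000 * Real.log n / n * a k := by
        apply mul_le_mul_of_nonneg_right _ hak.le
        rw [hδ, div_le_div_iff_of_pos_right hn0]
        linarith
      nlinarith
    exact ulam_no_big_gaps a n δ ha1 hleast hbig hδpos hδ1 hD2 hstep
end

section
/- Let (a_k) be the first n+1 Ulam numbers and define δ by min_{1≤k≤n} a_{k+1}/a_k = 1 + δ. If 0 < δ < 1/2, then every sum a_n + a_i with a_i ≤ δ a_n / 2 and 1 ≤ i < n that lies in [a_n, a_n + δ a_n / 2] must have a second representation a_n + a_i = a_j + a_k with 1 ≤ j < k ≤ n and (j,k) ≠ (i,n); otherwise a_{n+1} ≤ a_n + a_i < (1+δ) a_n, a contradiction. -/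
/-- If every consecutive ratio among the first `n+1` Ulam numbers is at least `1 + δ`
with `0 < δ < 1/2`, then every sum `a n + a i` with `1 ≤ i < n` and
`a i ≤ δ * a n / 2` (which lies in `[a n, a n + δ * a n / 2]`) must admit a second
representation `a j + a k` with `1 ≤ j < k ≤ n` and `(j, k) ≠ (i, n)`. -/
theorem ulam_blocked_sums (a : ℕ → ℕ) (ha : IsUlamSeq a) (n : ℕ) (hn : 2 ≤ n)
    (δ : ℝ) (hδ0 : 0 < δ) (hδ1 : δ < 1 / 2)
    (hgap : ∀ k, 1 ≤ k → k ≤ n → (1 + δ) * (a k : ℝ) ≤ (a (k + 1) : ℝ))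
    (i : ℕ) (hi : 1 ≤ i) (hin : i < n) (hsmall : (a i : ℝ) ≤ δ * (a n : ℝ) / 2) :
    ((a n : ℝ) ≤ (a n : ℝ) + (a i : ℝ) ∧
        (a n : ℝ) + (a i : ℝ) ≤ (a n : ℝ) + δ * (a n : ℝ) / 2) ∧
      ∃ j k, 1 ≤ j ∧ j < k ∧ k ≤ n ∧ (j, k) ≠ (i, n) ∧ a j + a k = a n + a i := by
  obtain ⟨h1, h2, hleast⟩ := ha
  -- positivity of a k for 1 ≤ k ≤ n
  have hpos : ∀ k, 1 ≤ k → k ≤ n → 0 < a k := by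
    intro k hk1 hkn
    induction k with
    | zero => omega
    | succ m ih =>
      rcases Nat.eq_or_lt_of_le hk1 with h | h
      · have hm0 : m = 0 := by omega
        subst hm0; simp [h1]
      · have hm1 : 1 ≤ m := by omega
        have hmn : m ≤ n := by omega
        have hpm : 0 < a m := ih hm1 hmn
        have := hgap m hm1 (by omega)
        have h1d : (1:ℝ) < 1 + δ := by linarith
        have : (0:ℝ) < (a (m+1) : ℝ) := by
          have : (0:ℝ) < (1 + δ) * (a m : ℝ) := by
            have : (0:ℝ) < (a m : ℝ) := by exact_mod_cast hpm
            nlinarith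
          linarith [hgap m hm1 (by omega)]
        exact_mod_cast this
  have hai : 0 < a i := hpos i hi (le_of_lt hin)
  have han : 0 < a n := hpos n (by omega) le_rfl
  refine ⟨⟨le_add_of_nonneg_right (Nat.cast_nonneg _), by linarith⟩, ?_⟩
  by_contra hcon
  push_neg at hcon
  have huniq : UlamUniqueRep a n (a n + a i) := by
    refine ⟨(i, n), ⟨hi, hin, le_rfl, by simp [Nat.add_comm]⟩, ?_⟩
    rintro ⟨j, k⟩ ⟨hj1, hjk, hkn, hsum⟩
    by_contra hne
    exact (hcon j k hj1 hjk hkn (by simpa using hne)) (by simpa [Nat.add_comm] using hsum)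
  have hmem := (hleast n hn).2 ⟨by omega, huniq⟩
  have hreal : (a (n+1) : ℝ) ≤ (a n : ℝ) + (a i : ℝ) := by exact_mod_cast hmem
  have hganr : (0:ℝ) < (a n : ℝ) := by exact_mod_cast han
  have := hgap n (by omega) le_rfl
  nlinarith
end
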